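/- Let κ, m, α, a ∈ ℝ with α ≠ 0. Let φ : ℝ → ℝ → ℝ be C² on ℝ² and satisfy φ_t(t,z) + κ·φ_zz(t,z) + a·φ_z(t,z) = 0 for all (t,z) ∈ ℝ². Suppose u : ℝ → ℝ → ℝ is C² on ℝ × (0,∞), α + u_r(t,r) ≠ 0 for all t ∈ ℝ and r > 0, and u satisfies u_t(t,r) = κ·(u_rr(t,r) − (m/r)·(α + u_r(t,r)))/(α + u_r(t,r))² + a for all t ∈ ℝ and r > 0. Define T(t,r) = r^m·φ(t, α·r + u(t,r)) and X(t,r) = κ·r^m·φ_z(t, α·r + u(t,r))/(α + u_r(t,r)). Then ∂T/∂t(t,r) + ∂X/∂r(t,r) = 0 for all t ∈ ℝ and r > 0. -/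

import Mathlib

noncomputable section

/-- Partial derivative in the first (time) variable. -/
def partial_t (u : ℝ → ℝ → ℝ) (t r : ℝ) : ℝ := deriv (fun s => u s r) t

/-- Partial derivative in the second (space) variable. -/
def partial_r (u : ℝ → ℝ → ℝ) (t r : ℝ) : ℝ := deriv (fun s => u t s) r

/-- Second partial derivative in the second (space) variable. -/
def partial_rr (u : ℝ → ℝ → ℝ) (t r : ℝ) : ℝ := deriv (deriv (fun s => u t s)) r

/-- Mixed partial derivative: first in space, then in time. -/
def partial_tr (u : ℝ → ℝ → ℝ) (t r : ℝ) : ℝ := deriv (fun s => deriv (fun y => u s y) r) t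

/-- `u` is C² on ℝ × (0,∞): `u`, `u_t`, `u_r`, `u_rr` and the mixed partial `u_tr`
exist and are continuous there. -/
def IsC2On (u : ℝ → ℝ → ℝ) : Prop :=
  (∀ t r : ℝ, 0 < r → DifferentiableAt ℝ (fun s => u s r) t) ∧
  (∀ t r : ℝ, 0 < r → DifferentiableAt ℝ (fun s => u t s) r) ∧
  (∀ t r : ℝ, 0 < r → DifferentiableAt ℝ (deriv (fun s => u t s)) r) ∧
  (∀ t r : ℝ, 0 < r → DifferentiableAt ℝ (fun s => deriv (fun y => u s y) r) t) ∧
  ContinuousOn (fun q : ℝ × ℝ => u q.1 q.2) {q : ℝ × ℝ | 0 < q.2} ∧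
  ContinuousOn (fun q : ℝ × ℝ => partial_t u q.1 q.2) {q : ℝ × ℝ | 0 < q.2} ∧
  ContinuousOn (fun q : ℝ × ℝ => partial_r u q.1 q.2) {q : ℝ × ℝ | 0 < q.2} ∧
  ContinuousOn (fun q : ℝ × ℝ => partial_rr u q.1 q.2) {q : ℝ × ℝ | 0 < q.2} ∧
  ContinuousOn (fun q : ℝ × ℝ => partial_tr u q.1 q.2) {q : ℝ × ℝ | 0 < q.2}

lemma pair_apply' (L : ℝ × ℝ →L[ℝ] ℝ) (a b : ℝ) :
    L (a, b) = a * L (1, 0) + b * L (0, 1) := by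
  have h : (a, b) = a • ((1:ℝ), (0:ℝ)) + b • ((0:ℝ), (1:ℝ)) := by
    simp [Prod.ext_iff]
  rw [h, L.map_add, L.map_smul, L.map_smul]
  simp [smul_eq_mul]

/-- Infinite family of conservation laws for the 1-dimensional nonlinear
diffusion-reaction equation with diffusivity `h(v) = -κ/(α+v)` and constant source `a`. -/
theorem conservation_law_phi_family_alpha (κ m α a : ℝ) (hα : α ≠ 0)
    (φ : ℝ → ℝ → ℝ) (hφ : ContDiff ℝ 2 (Function.uncurry φ))
    (hlin : ∀ t z : ℝ, partial_t φ t z + κ * partial_rr φ t z + a * partial_r φ t z = 0)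
    (u : ℝ → ℝ → ℝ) (hu : IsC2On u)
    (hur : ∀ t r : ℝ, 0 < r → α + partial_r u t r ≠ 0)
    (hpde : ∀ t r : ℝ, 0 < r →
      partial_t u t r
        = κ * (partial_rr u t r - (m / r) * (α + partial_r u t r))
            / (α + partial_r u t r) ^ 2 + a)
    (T X : ℝ → ℝ → ℝ)
    (hT : ∀ t r : ℝ, T t r = r ^ m * φ t (α * r + u t r))
    (hX : ∀ t r : ℝ, X t r
      = κ * r ^ m * partial_r φ t (α * r + u t r) / (α + partial_r u t r)) :
    ∀ t r : ℝ, 0 < r → partial_t T t r + partial_r X t r = 0 := by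
  intro t r hr
  obtain ⟨hu1, hu2, hu3, -⟩ := hu
  set Φ : ℝ × ℝ → ℝ := Function.uncurry φ with hΦdef
  have hΦd : Differentiable ℝ Φ := hφ.differentiable (by norm_num)
  set Ψ : ℝ × ℝ → ℝ := fun p => fderiv ℝ Φ p (0, 1) with hΨdef
  have hΨc : ContDiff ℝ 1 Ψ := by
    have h1 : ContDiff ℝ 1 (fderiv ℝ Φ) :=
      hφ.fderiv_right (by norm_num)
    exact h1.clm_apply contDiff_const
  have hΨd : Differentiable ℝ Ψ := hΨc.differentiable (by norm_num)
  -- partial derivatives of φ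
  have hpr : ∀ a b : ℝ, partial_r φ a b = Ψ (a, b) := by
    intro a b
    have h : HasDerivAt (fun s => Φ (a, s)) (fderiv ℝ Φ (a, b) (0, 1)) b :=
      ((hΦd (a, b)).hasFDerivAt).comp_hasDerivAt b
        ((hasDerivAt_const b a).prodMk (hasDerivAt_id b))
    exact h.deriv
  have hpt : ∀ a b : ℝ, partial_t φ a b = fderiv ℝ Φ (a, b) (1, 0) := by
    intro a b
    have h : HasDerivAt (fun s => Φ (s, b)) (fderiv ℝ Φ (a, b) (1, 0)) a :=
      by have h := ((hΦd (a, b)).hasFDerivAt).comp_hasDerivAt a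
            ((hasDerivAt_id a).prodMk (hasDerivAt_const a b)); exact h
    exact h.deriv
  have hprr : ∀ a b : ℝ, partial_rr φ a b = fderiv ℝ Ψ (a, b) (0, 1) := by
    intro a b
    have he : deriv (fun s => φ a s) = fun s => Ψ (a, s) := by
      funext s
      exact hpr a s
    have h : HasDerivAt (fun s => Ψ (a, s)) (fderiv ℝ Ψ (a, b) (0, 1)) b :=
      ((hΨd (a, b)).hasFDerivAt).comp_hasDerivAt b
        ((hasDerivAt_const b a).prodMk (hasDerivAt_id b))
    rw [partial_rr, he]
    exact h.deriv
  -- abbreviations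
  set z : ℝ := α * r + u t r with hz
  set p : ℝ := partial_t u t r with hp
  set q : ℝ := partial_r u t r with hq
  set s2 : ℝ := partial_rr u t r with hs2
  have hd : α + q ≠ 0 := hur t r hr
  -- derivative of T in time
  have hw : HasDerivAt (fun s => α * r + u s r) p t :=
    ((hu1 t r hr).hasDerivAt).const_add (α * r)
  have hTc : HasDerivAt (fun s => Φ (s, α * r + u s r)) (fderiv ℝ Φ (t, z) (1, p)) t :=
    by have h := ((hΦd (t, z)).hasFDerivAt).comp_hasDerivAt t ((hasDerivAt_id t).prodMk hw); exact h
  have hTfun : (fun s => T s r) = fun s => r ^ m * Φ (s, α * r + u s r) :=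
    funext fun s => hT s r
  have hTt : partial_t T t r = r ^ m * (fderiv ℝ Φ (t, z) (1, p)) := by
    rw [partial_t, hTfun]
    exact (hTc.const_mul (r ^ m)).deriv
  -- derivative of X in space
  have hg : HasDerivAt (fun s => α + deriv (fun y => u t y) s) s2 r :=
    ((hu3 t r hr).hasDerivAt).const_add α
  have hrm : HasDerivAt (fun s : ℝ => s ^ m) (m * r ^ (m - 1)) r :=
    Real.hasDerivAt_rpow_const (Or.inl hr.ne')
  have hcurve : HasDerivAt (fun s => (t, α * s + u t s)) ((0 : ℝ), α + q) r := by
    have h1 : HasDerivAt (fun s : ℝ => α * s + u t s) (α + q) r := by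
      have := ((hasDerivAt_id r).const_mul α).add (hu2 t r hr).hasDerivAt
      simpa [Pi.add_def, hq, partial_r] using this
    exact (hasDerivAt_const r t).prodMk h1
  have hΨcurve : HasDerivAt (fun s => Ψ (t, α * s + u t s))
      (fderiv ℝ Ψ (t, z) (0, α + q)) r :=
    by have h := ((hΨd (t, z)).hasFDerivAt).comp_hasDerivAt r hcurve; exact h
  have hnum : HasDerivAt (fun s => κ * s ^ m * Ψ (t, α * s + u t s))
      (κ * (m * r ^ (m - 1)) * Ψ (t, z) + κ * r ^ m * fderiv ℝ Ψ (t, z) (0, α + q)) r := by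
    have := (hrm.const_mul κ).mul hΨcurve
    simpa [mul_assoc, Pi.mul_def] using this
  have hXfun : (fun s => X t s)
      = fun s => κ * s ^ m * Ψ (t, α * s + u t s) / (α + deriv (fun y => u t y) s) := by
    funext s
    rw [hX t s, hpr]
    rfl
  have hXr : partial_r X t r =
      ((κ * (m * r ^ (m - 1)) * Ψ (t, z) + κ * r ^ m * fderiv ℝ Ψ (t, z) (0, α + q))
          * (α + q)
        - κ * r ^ m * Ψ (t, z) * s2) / (α + q) ^ 2 := by
    rw [partial_r, hXfun]
    exact (hnum.div hg hd).deriv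
  -- decompose the fderiv applications
  have hΦdec : fderiv ℝ Φ (t, z) (1, p) = partial_t φ t z + p * partial_r φ t z := by
    rw [pair_apply' _ 1 p, hpt, hpr]
    ring
  have hΨdec : fderiv ℝ Ψ (t, z) (0, α + q) = (α + q) * partial_rr φ t z := by
    rw [pair_apply' _ 0 (α + q), hprr]
    ring
  -- algebra
  have hrm1 : r ^ (m - 1) = r ^ m / r := by
    rw [Real.rpow_sub hr, Real.rpow_one]
  have hA : partial_t φ t z = -(κ * partial_rr φ t z) - a * partial_r φ t z := by
    have := hlin t z
    linarith
  have hppde : p = κ * (s2 - m / r * (α + q)) / (α + q) ^ 2 + a := hpde t r hr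
  rw [hTt, hXr, hΦdec, hΨdec, hA, hppde, hrm1, ← hpr]
  have hr0 : r ≠ 0 := hr.ne'
  field_simp
  ring
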